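/- Let Y be a finite simple graph and e = {v,w} a bridge of Y joining subgraphs Y₁ and Y₂ (so Y − e has components containing Y₁ and Y₂ respectively). Then κ(Y) = κ(Y₁)·κ(Y₂). -/

import Mathlib

/-- An orientation of a simple graph: a choice of direction for each edge. -/
structure GraphOrientation {V : Type*} (G : SimpleGraph V) where
  dir : V → V → Prop
  consistent : ∀ u v, G.Adj u v ↔ (dir u v ∨ dir v u)
  asymm : ∀ u v, dir u v → ¬ dir v u

/-- An orientation is acyclic if its directed graph has no directed cycle. -/
def GraphOrientation.IsAcyclic {V : Type*} {G : SimpleGraph V} (O : GraphOrientation G) : Prop :=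
  ∀ v, ¬ Relation.TransGen O.dir v v

/-- The type of acyclic orientations of `G`. -/
def AcycGraphOrientation {V : Type*} (G : SimpleGraph V) := {O : GraphOrientation G // O.IsAcyclic}

/-- `Click O O'` holds when `O'` is obtained from `O` by a source-to-sink operation:
reversing all edges incident to some source vertex `v`. -/
def Click {V : Type*} {G : SimpleGraph V} (O O' : GraphOrientation G) : Prop :=
  ∃ v, (∀ u, ¬ O.dir u v) ∧
    ∀ u w, O'.dir u w ↔ (((u = v ∨ w = v) ∧ O.dir w u) ∨ (u ≠ v ∧ w ≠ v ∧ O.dir u w))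

/-- κ(G): the number of equivalence classes of acyclic orientations of `G` under the
equivalence generated by source-to-sink operations. -/
noncomputable def kappa {V : Type*} (G : SimpleGraph V) : ℕ :=
  Nat.card (Quot (fun A B : AcycGraphOrientation G => Click A.1 B.1))

/-- Two graphs joined by a single bridge edge from `v ∈ V₁` to `w ∈ V₂`. -/
def bridgeGraph {V₁ V₂ : Type*} (G₁ : SimpleGraph V₁) (G₂ : SimpleGraph V₂)
    (v : V₁) (w : V₂) : SimpleGraph (V₁ ⊕ V₂) :=
  SimpleGraph.fromRel (fun x y =>
    match x, y with
    | .inl a, .inl b => G₁.Adj a b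
    | .inr a, .inr b => G₂.Adj a b
    | .inl a, .inr b => a = v ∧ b = w
    | _, _ => False)

section Aux

open Relation

variable {V : Type*} {G : SimpleGraph V}

theorem GraphOrientation.dir_irrefl (O : GraphOrientation G) (a : V) : ¬ O.dir a a :=
  fun h => O.asymm a a h h

theorem GraphOrientation.ext' {O O' : GraphOrientation G}
    (h : ∀ u w, O.dir u w ↔ O'.dir u w) : O = O' := by
  have hd : O.dir = O'.dir := by funext u w; exact propext (h u w)
  cases O; cases O'; cases hd; rfl

/-- Perform a click at a source `x`. -/
def clickAt (O : GraphOrientation G) (x : V) (hx : ∀ u, ¬ O.dir u x) :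
    GraphOrientation G where
  dir u w := ((u = x ∨ w = x) ∧ O.dir w u) ∨ (u ≠ x ∧ w ≠ x ∧ O.dir u w)
  consistent u w := by
    have h1 := O.consistent u w
    have h2 := O.consistent w u
    have h3 := O.dir_irrefl u
    by_cases hu : u = x <;> by_cases hw : w = x <;> subst_eqs <;> simp_all <;> tauto
  asymm u w := by
    have h1 := O.asymm u w
    have h2 := O.asymm w u
    tauto

theorem click_clickAt (O : GraphOrientation G) (x : V) (hx : ∀ u, ¬ O.dir u x) :
    Click O (clickAt O x hx) :=
  ⟨x, hx, fun _ _ => Iff.rfl⟩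

theorem clickAt_acyclic {O : GraphOrientation G} (hO : O.IsAcyclic) (x : V)
    (hx : ∀ u, ¬ O.dir u x) : (clickAt O x hx).IsAcyclic := by
  set O' := clickAt O x hx with hO'
  have sink : ∀ u, ¬ O'.dir x u := by
    intro u h
    rcases h with ⟨_, h⟩ | ⟨h, _, _⟩
    · exact hx u h
    · exact h rfl
  have aux : ∀ a b, TransGen O'.dir a b → a ≠ x →
      b = x ∨ (b ≠ x ∧ TransGen O.dir a b) := by
    intro a b h
    induction h with
    | single h =>
      rename_i c
      intro ha
      by_cases hb : c = x
      · exact Or.inl hb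
      · refine Or.inr ⟨hb, TransGen.single ?_⟩
        rcases h with ⟨hc, _⟩ | ⟨_, _, h⟩
        · tauto
        · exact h
    | tail h2 h3 ih =>
      rename_i b' c
      intro ha
      rcases ih ha with hb | ⟨hb, htg⟩
      · subst hb; exact absurd h3 (sink _)
      · by_cases hc : c = x
        · exact Or.inl hc
        · refine Or.inr ⟨hc, htg.tail ?_⟩
          rcases h3 with ⟨_, h⟩ | ⟨_, _, h⟩
          · tauto
          · exact h
  intro a ha
  by_cases hax : a = x
  · subst hax
    obtain ⟨c, h, -⟩ := Relation.TransGen.head'_iff.mp ha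
    exact sink _ h
  · rcases aux a a ha hax with h | ⟨_, h⟩
    · exact hax h
    · exact hO a h

end Aux

section Bridge

open Relation

variable {V₁ V₂ : Type*} [Fintype V₁] [Fintype V₂]
  {G₁ : SimpleGraph V₁} {G₂ : SimpleGraph V₂} {v : V₁} {w : V₂}

theorem adj_ll {a c : V₁} :
    (bridgeGraph G₁ G₂ v w).Adj (.inl a) (.inl c) ↔ G₁.Adj a c := by
  simp only [bridgeGraph, SimpleGraph.fromRel_adj, ne_eq, Sum.inl.injEq]
  constructor
  · rintro ⟨_, h | h⟩
    · exact h
    · exact h.symm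
  · intro h
    exact ⟨G₁.ne_of_adj h, Or.inl h⟩

theorem adj_rr {a c : V₂} :
    (bridgeGraph G₁ G₂ v w).Adj (.inr a) (.inr c) ↔ G₂.Adj a c := by
  simp only [bridgeGraph, SimpleGraph.fromRel_adj, ne_eq, Sum.inr.injEq]
  constructor
  · rintro ⟨_, h | h⟩
    · exact h
    · exact h.symm
  · intro h
    exact ⟨G₂.ne_of_adj h, Or.inl h⟩

theorem adj_lr {a : V₁} {c : V₂} :
    (bridgeGraph G₁ G₂ v w).Adj (.inl a) (.inr c) ↔ a = v ∧ c = w := by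
  simp only [bridgeGraph, SimpleGraph.fromRel_adj, ne_eq]
  constructor
  · rintro ⟨_, h | h⟩
    · exact h
    · exact absurd h not_false
  · intro h
    exact ⟨by simp, Or.inl h⟩

theorem adj_rl {a : V₂} {c : V₁} :
    (bridgeGraph G₁ G₂ v w).Adj (.inr a) (.inl c) ↔ c = v ∧ a = w := by
  rw [SimpleGraph.adj_comm]; exact adj_lr

/-- An orientation of the bridge graph, given orientations of the parts and a set `S`
of "already clicked" vertices of `V₂`. Edges of `G₂` with exactly one endpoint in `S`
are reversed; the bridge points from `v` to `w` iff `w ∈ S`. -/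
def orient (O₁ : GraphOrientation G₁) (O₂ : GraphOrientation G₂) (S : Finset V₂) :
    GraphOrientation (bridgeGraph G₁ G₂ v w) where
  dir x y :=
    match x, y with
    | .inl a, .inl c => O₁.dir a c
    | .inr a, .inr c => ((a ∈ S ↔ c ∈ S) ∧ O₂.dir a c) ∨ (¬(a ∈ S ↔ c ∈ S) ∧ O₂.dir c a)
    | .inl a, .inr c => a = v ∧ c = w ∧ w ∈ S
    | .inr a, .inl c => a = w ∧ c = v ∧ w ∉ S
  consistent x y := by
    rcases x with a | a <;> rcases y with c | c <;>
      simp only [adj_ll, adj_rr, adj_lr, adj_rl]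
    · have := O₁.consistent a c; tauto
    · by_cases hw : w ∈ S <;> tauto
    · by_cases hw : w ∈ S <;> tauto
    · have := O₂.consistent a c
      by_cases h1 : a ∈ S <;> by_cases h2 : c ∈ S <;> tauto
  asymm x y := by
    rcases x with a | a <;> rcases y with c | c
    · exact O₁.asymm a c
    · tauto
    · tauto
    · have h1 := O₂.asymm a c
      have h2 := O₂.asymm c a
      tauto

theorem orient_acyclic {O₁ : GraphOrientation G₁} {O₂ : GraphOrientation G₂}
    (h₁ : O₁.IsAcyclic) (h₂ : O₂.IsAcyclic) {S : Finset V₂}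
    (ht : ∀ a c : V₂, a ∈ S ↔ c ∈ S) :
    (orient (v := v) (w := w) O₁ O₂ S).IsAcyclic := by
  have key : ∀ x y, TransGen (orient (v := v) (w := w) O₁ O₂ S).dir x y →
      (∀ a c, x = Sum.inl a → y = Sum.inl c → TransGen O₁.dir a c) ∧
      (∀ a c, x = Sum.inr a → y = Sum.inr c → TransGen O₂.dir a c) ∧
      (∀ a c, x = Sum.inl a → y = Sum.inr c → w ∈ S) ∧
      (∀ a c, x = Sum.inr a → y = Sum.inl c → w ∉ S) := by
    intro x y h
    induction h with
    | single h =>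
      refine ⟨?_, ?_, ?_, ?_⟩
      · rintro a c rfl rfl
        exact TransGen.single h
      · rintro a c rfl rfl
        rcases h with ⟨_, h⟩ | ⟨hn, _⟩
        · exact TransGen.single h
        · exact absurd (ht a c) hn
      · rintro a c rfl rfl
        exact h.2.2
      · rintro a c rfl rfl
        exact h.2.2
    | tail h2 h3 ih =>
      rename_i b y'
      refine ⟨?_, ?_, ?_, ?_⟩
      · rintro a c rfl rfl
        rcases b with e | e
        · exact (ih.1 a e rfl rfl).tail h3
        · exact absurd (ih.2.2.1 a e rfl rfl) h3.2.2
      · rintro a c rfl rfl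
        rcases b with e | e
        · exact absurd h3.2.2 (ih.2.2.2 a e rfl rfl)
        · rcases h3 with ⟨_, h3⟩ | ⟨hn, _⟩
          · exact (ih.2.1 a e rfl rfl).tail h3
          · exact absurd (ht e c) hn
      · rintro a c rfl rfl
        rcases b with e | e
        · exact h3.2.2
        · exact ih.2.2.1 a e rfl rfl
      · rintro a c rfl rfl
        rcases b with e | e
        · exact ih.2.2.2 a e rfl rfl
        · exact h3.2.2
  rintro (a | a) h
  · exact h₁ a ((key _ _ h).1 a a rfl rfl)
  · exact h₂ a ((key _ _ h).2.1 a a rfl rfl)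


variable {O₁ : GraphOrientation G₁} {O₂ : GraphOrientation G₂}

/-- `S` is closed under taking predecessors. -/
def Down (O₂ : GraphOrientation G₂) (S : Finset V₂) : Prop :=
  ∀ ⦃z y⦄, z ∈ S → O₂.dir y z → y ∈ S

theorem orient_source {S : Finset V₂} (hd : Down O₂ S) {y : V₂} (hy : y ∉ S)
    (hmin : ∀ z, z ∉ S → ¬ O₂.dir z y) :
    ∀ u, ¬ (orient (v := v) (w := w) O₁ O₂ S).dir u (.inr y) := by
  rintro (a | a) h
  · obtain ⟨-, rfl, hw⟩ := h
    exact hy hw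
  · rcases h with ⟨hiff, h⟩ | ⟨hiff, h⟩
    · exact hmin a (fun haS => hy (hiff.mp haS)) h
    · have haS : a ∈ S := by tauto
      exact hy (hd haS h)

theorem clickAt_orient [DecidableEq V₂] {S : Finset V₂} (hd : Down O₂ S) {y : V₂} (hy : y ∉ S)
    (hmin : ∀ z, z ∉ S → ¬ O₂.dir z y) :
    clickAt (orient (v := v) (w := w) O₁ O₂ S) (.inr y) (orient_source hd hy hmin)
      = orient O₁ O₂ (insert y S) := by
  apply GraphOrientation.ext'
  have hirr := O₂.dir_irrefl y
  rintro (a | a) (c | c) <;>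
    simp only [clickAt, orient, Finset.mem_insert, reduceCtorEq, Sum.inl.injEq,
      Sum.inr.injEq, false_or, or_false, ne_eq, not_false_iff, true_and, false_and,
      and_true, not_or]
  · -- inl a, inr c
    constructor
    · rintro (⟨h1, h2, h3, hws⟩ | ⟨hne, h1, h2, hws⟩) <;> subst_vars <;> simp_all
    · rintro ⟨h1, h2, h3 | hws⟩ <;> subst_vars
      · simp_all
      · exact Or.inr ⟨fun hh => hy (hh ▸ hws), rfl, rfl, hws⟩
  · -- inr a, inl c
    constructor
    · rintro (⟨h1, h2, h3, hws⟩ | ⟨hne, h1, h2, hws⟩) <;> subst_vars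
      · exact absurd hws hy
      · exact ⟨rfl, rfl, hne, hws⟩
    · rintro ⟨h1, h2, hny, hws⟩
      subst_vars
      exact Or.inr ⟨hny, rfl, rfl, hws⟩
  · -- inr a, inr c
    have has := O₂.asymm a c
    have has2 := O₂.asymm c a
    have hma := hmin a
    have hmc := hmin c
    have hirr2 := O₂.dir_irrefl a
    have hirr3 := O₂.dir_irrefl c
    by_cases h3 : a ∈ S <;> by_cases h4 : c ∈ S <;>
      by_cases h1 : a = y <;> by_cases h2 : c = y <;> simp_all <;> tauto

theorem chain [DecidableEq V₂] (h₂ : O₂.IsAcyclic) :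
    ∀ (n : ℕ) (S : Finset V₂), Down O₂ S → Sᶜ.card = n →
    ∀ (h : (orient (v := v) (w := w) O₁ O₂ S).IsAcyclic)
      (h' : (orient (v := v) (w := w) O₁ O₂ Finset.univ).IsAcyclic),
    Quot.mk (fun A B : AcycGraphOrientation (bridgeGraph G₁ G₂ v w) => Click A.1 B.1)
        ⟨orient O₁ O₂ S, h⟩
      = Quot.mk _ ⟨orient O₁ O₂ Finset.univ, h'⟩ := by
  intro n
  induction n with
  | zero =>
    intro S hd hcard h h'
    have hS : S = Finset.univ := by
      rwa [Finset.card_eq_zero, Finset.compl_eq_empty_iff] at hcard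
    subst hS
    rfl
  | succ n ih =>
    intro S hd hcard h h'
    have hne : Sᶜ.Nonempty := by
      rw [← Finset.card_pos, hcard]; omega
    have wf : WellFounded (Relation.TransGen O₂.dir) := by
      haveI : IsTrans V₂ (Relation.TransGen O₂.dir) := ⟨fun _ _ _ => Relation.TransGen.trans⟩
      haveI : IsIrrefl V₂ (Relation.TransGen O₂.dir) := ⟨h₂⟩
      exact Finite.wellFounded_of_trans_of_irrefl _
    obtain ⟨y0, hy0⟩ := hne
    obtain ⟨y, hyc, hymin⟩ := wf.has_min {z | z ∉ S} ⟨y0, Finset.mem_compl.mp hy0⟩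
    have hy : y ∉ S := hyc
    have hmin : ∀ z, z ∉ S → ¬ O₂.dir z y :=
      fun z hz hdir => hymin z hz (Relation.TransGen.single hdir)
    have hsrc := orient_source (v := v) (w := w) (O₁ := O₁) hd hy hmin
    have step := clickAt_orient (v := v) (w := w) (O₁ := O₁) hd hy hmin
    have hacy' : (orient (v := v) (w := w) O₁ O₂ (insert y S)).IsAcyclic :=
      step ▸ clickAt_acyclic h _ hsrc
    have hd' : Down O₂ (insert y S) := by
      intro z t hz ht
      rcases Finset.mem_insert.mp hz with rfl | hzS
      · by_cases hts : t ∈ S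
        · exact Finset.mem_insert_of_mem hts
        · exact absurd ht (hmin t hts)
      · exact Finset.mem_insert_of_mem (hd hzS ht)
    have hcard' : (insert y S)ᶜ.card = n := by
      rw [Finset.compl_insert, Finset.card_erase_of_mem (Finset.mem_compl.mpr hy), hcard]
      omega
    calc Quot.mk _ (⟨orient O₁ O₂ S, h⟩ :
            AcycGraphOrientation (bridgeGraph G₁ G₂ v w))
        = Quot.mk _ ⟨orient O₁ O₂ (insert y S), hacy'⟩ :=
          Quot.sound (show Click (orient O₁ O₂ S) (orient O₁ O₂ (insert y S)) from
            step ▸ click_clickAt (orient O₁ O₂ S) (Sum.inr y) hsrc)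
      _ = Quot.mk _ ⟨orient O₁ O₂ Finset.univ, h'⟩ := ih _ hd' hcard' hacy' h'

theorem flip_bridge [DecidableEq V₂] (h₂ : O₂.IsAcyclic)
    (h : (orient (v := v) (w := w) O₁ O₂ ∅).IsAcyclic)
    (h' : (orient (v := v) (w := w) O₁ O₂ Finset.univ).IsAcyclic) :
    Quot.mk (fun A B : AcycGraphOrientation (bridgeGraph G₁ G₂ v w) => Click A.1 B.1)
        ⟨orient O₁ O₂ ∅, h⟩
      = Quot.mk _ ⟨orient O₁ O₂ Finset.univ, h'⟩ :=
  chain h₂ _ ∅ (fun _ _ hz => absurd hz (Finset.notMem_empty _)) rfl h h'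


/-- Restriction of an orientation of the bridge graph to `G₁`. -/
def res₁ (O : GraphOrientation (bridgeGraph G₁ G₂ v w)) : GraphOrientation G₁ where
  dir a c := O.dir (.inl a) (.inl c)
  consistent a c := by
    rw [← adj_ll (G₁ := G₁) (G₂ := G₂) (v := v) (w := w)]
    exact O.consistent _ _
  asymm a c := O.asymm _ _

/-- Restriction of an orientation of the bridge graph to `G₂`. -/
def res₂ (O : GraphOrientation (bridgeGraph G₁ G₂ v w)) : GraphOrientation G₂ where
  dir a c := O.dir (.inr a) (.inr c)
  consistent a c := by
    rw [← adj_rr (G₁ := G₁) (G₂ := G₂) (v := v) (w := w)]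
    exact O.consistent _ _
  asymm a c := O.asymm _ _

theorem res₁_acyclic {O : GraphOrientation (bridgeGraph G₁ G₂ v w)} (h : O.IsAcyclic) :
    (res₁ O).IsAcyclic :=
  fun a ha => h (Sum.inl a) (Relation.TransGen.lift (r := (res₁ O).dir) (p := O.dir) Sum.inl (fun _ _ hh => hh) _ _ ha)

theorem res₂_acyclic {O : GraphOrientation (bridgeGraph G₁ G₂ v w)} (h : O.IsAcyclic) :
    (res₂ O).IsAcyclic :=
  fun a ha => h (Sum.inr a) (Relation.TransGen.lift (r := (res₂ O).dir) (p := O.dir) Sum.inr (fun _ _ hh => hh) _ _ ha)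

theorem click_res {O O' : GraphOrientation (bridgeGraph G₁ G₂ v w)} (h : Click O O') :
    (Click (res₁ O) (res₁ O') ∧ res₂ O' = res₂ O) ∨
    (Click (res₂ O) (res₂ O') ∧ res₁ O' = res₁ O) := by
  obtain ⟨x, hsrc, hform⟩ := h
  rcases x with a | a
  · left
    constructor
    · refine ⟨a, fun u hu => hsrc (.inl u) hu, fun u c => ?_⟩
      have hf := hform (.inl u) (.inl c)
      simpa [res₁] using hf
    · apply GraphOrientation.ext'
      intro u c
      have hf := hform (.inr u) (.inr c)
      simpa [res₂] using hf
  · right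
    constructor
    · refine ⟨a, fun u hu => hsrc (.inr u) hu, fun u c => ?_⟩
      have hf := hform (.inr u) (.inr c)
      simpa [res₂] using hf
    · apply GraphOrientation.ext'
      intro u c
      have hf := hform (.inl u) (.inl c)
      simpa [res₁] using hf

theorem key1 [DecidableEq V₂] {O₁ O₁' : GraphOrientation G₁}
    (h₁ : O₁.IsAcyclic) (h₁' : O₁'.IsAcyclic) (h₂ : O₂.IsAcyclic) (hc : Click O₁ O₁') :
    Quot.mk (fun A B : AcycGraphOrientation (bridgeGraph G₁ G₂ v w) => Click A.1 B.1)
        ⟨orient O₁ O₂ Finset.univ, orient_acyclic h₁ h₂ (by simp)⟩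
      = Quot.mk _ ⟨orient O₁' O₂ Finset.univ, orient_acyclic h₁' h₂ (by simp)⟩ := by
  obtain ⟨a, hsrc, hform⟩ := hc
  have hsrcY : ∀ u, ¬ (orient (v := v) (w := w) O₁ O₂ Finset.univ).dir u (.inl a) := by
    rintro (c | c) h
    · exact hsrc c h
    · exact h.2.2 (Finset.mem_univ w)
  by_cases hav : a = v
  · subst hav
    have heq : clickAt (orient (v := a) (w := w) O₁ O₂ Finset.univ) (.inl a) hsrcY
        = orient O₁' O₂ ∅ := by
      apply GraphOrientation.ext'
      rintro (x | x) (z | z)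
      · have hf := hform x z
        simp only [clickAt, orient, Finset.mem_univ, Finset.notMem_empty, reduceCtorEq,
          Sum.inl.injEq, Sum.inr.injEq, false_or, or_false, ne_eq, not_false_iff, true_and,
          false_and, and_true, and_false, not_true, or_self] <;> tauto
      · simp only [clickAt, orient, Finset.mem_univ, Finset.notMem_empty, reduceCtorEq,
          Sum.inl.injEq, Sum.inr.injEq, false_or, or_false, ne_eq, not_false_iff, true_and,
          false_and, and_true, and_false, not_true, or_self] <;> tauto
      · simp only [clickAt, orient, Finset.mem_univ, Finset.notMem_empty, reduceCtorEq,
          Sum.inl.injEq, Sum.inr.injEq, false_or, or_false, ne_eq, not_false_iff, true_and,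
          false_and, and_true, and_false, not_true, or_self] <;> tauto
      · simp only [clickAt, orient, Finset.mem_univ, Finset.notMem_empty, reduceCtorEq,
          Sum.inl.injEq, Sum.inr.injEq, false_or, or_false, ne_eq, not_false_iff, true_and,
          false_and, and_true, and_false, not_true, or_self] <;> tauto
    calc Quot.mk (fun A B : AcycGraphOrientation (bridgeGraph G₁ G₂ a w) => Click A.1 B.1)
          ⟨orient O₁ O₂ Finset.univ, orient_acyclic h₁ h₂ (by simp)⟩
        = Quot.mk _ ⟨orient O₁' O₂ ∅, orient_acyclic h₁' h₂ (by simp)⟩ :=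
          Quot.sound (show Click (orient O₁ O₂ Finset.univ) (orient O₁' O₂ ∅) from
            heq ▸ click_clickAt _ _ hsrcY)
      _ = Quot.mk _ ⟨orient O₁' O₂ Finset.univ, orient_acyclic h₁' h₂ (by simp)⟩ :=
          flip_bridge h₂ _ _
  · have heq : clickAt (orient (v := v) (w := w) O₁ O₂ Finset.univ) (.inl a) hsrcY
        = orient O₁' O₂ Finset.univ := by
      apply GraphOrientation.ext'
      have hg1 : ∀ x : V₁, x = v → x = a → False := fun x p q => hav (q.symm.trans p)
      rintro (x | x) (z | z)
      · have hf := hform x z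
        simp only [clickAt, orient, Finset.mem_univ, Finset.notMem_empty, reduceCtorEq,
          Sum.inl.injEq, Sum.inr.injEq, false_or, or_false, ne_eq, not_false_iff, true_and,
          false_and, and_true, and_false, not_true, or_self] <;> tauto
      · have hg := hg1 x
        simp only [clickAt, orient, Finset.mem_univ, Finset.notMem_empty, reduceCtorEq,
          Sum.inl.injEq, Sum.inr.injEq, false_or, or_false, ne_eq, not_false_iff, true_and,
          false_and, and_true, and_false, not_true, or_self] <;> tauto
      · have hg := hg1 z
        simp only [clickAt, orient, Finset.mem_univ, Finset.notMem_empty, reduceCtorEq,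
          Sum.inl.injEq, Sum.inr.injEq, false_or, or_false, ne_eq, not_false_iff, true_and,
          false_and, and_true, and_false, not_true, or_self] <;> tauto
      · simp only [clickAt, orient, Finset.mem_univ, Finset.notMem_empty, reduceCtorEq,
          Sum.inl.injEq, Sum.inr.injEq, false_or, or_false, ne_eq, not_false_iff, true_and,
          false_and, and_true, and_false, not_true, or_self] <;> tauto
    exact Quot.sound (show Click (orient O₁ O₂ Finset.univ) (orient O₁' O₂ Finset.univ) from
      heq ▸ click_clickAt _ _ hsrcY)

theorem key2 [DecidableEq V₂] {O₂ O₂' : GraphOrientation G₂}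
    (h₁ : O₁.IsAcyclic) (h₂ : O₂.IsAcyclic) (h₂' : O₂'.IsAcyclic) (hc : Click O₂ O₂') :
    Quot.mk (fun A B : AcycGraphOrientation (bridgeGraph G₁ G₂ v w) => Click A.1 B.1)
        ⟨orient O₁ O₂ Finset.univ, orient_acyclic h₁ h₂ (by simp)⟩
      = Quot.mk _ ⟨orient O₁ O₂' Finset.univ, orient_acyclic h₁ h₂' (by simp)⟩ := by
  obtain ⟨y, hsrc, hform⟩ := hc
  have hsrcY : ∀ u, ¬ (orient (v := v) (w := w) O₁ O₂ ∅).dir u (.inr y) := by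
    rintro (c | c) h
    · exact (Finset.notMem_empty w) h.2.2
    · rcases h with ⟨hiff, hd⟩ | ⟨hniff, hd⟩
      · exact hsrc c hd
      · exact hniff (by simp)
  have start : Quot.mk (fun A B : AcycGraphOrientation (bridgeGraph G₁ G₂ v w) => Click A.1 B.1)
        ⟨orient O₁ O₂ Finset.univ, orient_acyclic h₁ h₂ (by simp)⟩
      = Quot.mk _ ⟨orient O₁ O₂ ∅, orient_acyclic h₁ h₂ (by simp)⟩ :=
    (flip_bridge h₂ _ _).symm
  by_cases hyw : y = w
  · subst hyw
    have heq : clickAt (orient (v := v) (w := y) O₁ O₂ ∅) (.inr y) hsrcY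
        = orient O₁ O₂' Finset.univ := by
      apply GraphOrientation.ext'
      rintro (x | x) (z | z)
      · simp only [clickAt, orient, Finset.mem_univ, Finset.notMem_empty, reduceCtorEq,
          Sum.inl.injEq, Sum.inr.injEq, false_or, or_false, ne_eq, not_false_iff, true_and,
          false_and, and_true, and_false, not_true, or_self] <;> tauto
      · simp only [clickAt, orient, Finset.mem_univ, Finset.notMem_empty, reduceCtorEq,
          Sum.inl.injEq, Sum.inr.injEq, false_or, or_false, ne_eq, not_false_iff, true_and,
          false_and, and_true, and_false, not_true, or_self] <;> tauto
      · simp only [clickAt, orient, Finset.mem_univ, Finset.notMem_empty, reduceCtorEq,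
          Sum.inl.injEq, Sum.inr.injEq, false_or, or_false, ne_eq, not_false_iff, true_and,
          false_and, and_true, and_false, not_true, or_self] <;> tauto
      · have hf := hform x z
        simp only [clickAt, orient, Finset.mem_univ, Finset.notMem_empty, reduceCtorEq,
          Sum.inl.injEq, Sum.inr.injEq, false_or, or_false, ne_eq, not_false_iff, true_and,
          false_and, and_true, and_false, not_true, or_self] <;> tauto
    rw [start]
    exact Quot.sound (show Click (orient O₁ O₂ ∅) (orient O₁ O₂' Finset.univ) from
      heq ▸ click_clickAt _ _ hsrcY)
  · have heq : clickAt (orient (v := v) (w := w) O₁ O₂ ∅) (.inr y) hsrcY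
        = orient O₁ O₂' ∅ := by
      apply GraphOrientation.ext'
      have hg1 : ∀ x : V₂, x = w → x = y → False := fun x p q => hyw (q.symm.trans p)
      rintro (x | x) (z | z)
      · simp only [clickAt, orient, Finset.mem_univ, Finset.notMem_empty, reduceCtorEq,
          Sum.inl.injEq, Sum.inr.injEq, false_or, or_false, ne_eq, not_false_iff, true_and,
          false_and, and_true, and_false, not_true, or_self] <;> tauto
      · have hg := hg1 z
        simp only [clickAt, orient, Finset.mem_univ, Finset.notMem_empty, reduceCtorEq,
          Sum.inl.injEq, Sum.inr.injEq, false_or, or_false, ne_eq, not_false_iff, true_and,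
          false_and, and_true, and_false, not_true, or_self] <;> tauto
      · have hg := hg1 x
        simp only [clickAt, orient, Finset.mem_univ, Finset.notMem_empty, reduceCtorEq,
          Sum.inl.injEq, Sum.inr.injEq, false_or, or_false, ne_eq, not_false_iff, true_and,
          false_and, and_true, and_false, not_true, or_self] <;> tauto
      · have hf := hform x z
        simp only [clickAt, orient, Finset.mem_univ, Finset.notMem_empty, reduceCtorEq,
          Sum.inl.injEq, Sum.inr.injEq, false_or, or_false, ne_eq, not_false_iff, true_and,
          false_and, and_true, and_false, not_true, or_self] <;> tauto
    calc Quot.mk (fun A B : AcycGraphOrientation (bridgeGraph G₁ G₂ v w) => Click A.1 B.1)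
          ⟨orient O₁ O₂ Finset.univ, orient_acyclic h₁ h₂ (by simp)⟩
        = Quot.mk _ ⟨orient O₁ O₂ ∅, orient_acyclic h₁ h₂ (by simp)⟩ := start
      _ = Quot.mk _ ⟨orient O₁ O₂' ∅, orient_acyclic h₁ h₂' (by simp)⟩ :=
          Quot.sound (show Click (orient O₁ O₂ ∅) (orient O₁ O₂' ∅) from
            heq ▸ click_clickAt _ _ hsrcY)
      _ = Quot.mk _ ⟨orient O₁ O₂' Finset.univ, orient_acyclic h₁ h₂' (by simp)⟩ :=
          flip_bridge h₂' _ _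

end Bridge

section Assemble

open Relation

variable {V₁ V₂ : Type*} [Fintype V₁] [Fintype V₂]
  {G₁ : SimpleGraph V₁} {G₂ : SimpleGraph V₂} {v : V₁} {w : V₂}

/-- The forward map on quotients, by restriction. -/
noncomputable def Fmap :
    Quot (fun A B : AcycGraphOrientation (bridgeGraph G₁ G₂ v w) => Click A.1 B.1) →
      Quot (fun A B : AcycGraphOrientation G₁ => Click A.1 B.1) ×
      Quot (fun A B : AcycGraphOrientation G₂ => Click A.1 B.1) :=
  Quot.lift
    (fun A => (Quot.mk _ ⟨res₁ A.1, res₁_acyclic A.2⟩, Quot.mk _ ⟨res₂ A.1, res₂_acyclic A.2⟩))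
    (fun A B h => by
      rcases click_res h with ⟨hc, he⟩ | ⟨hc, he⟩
      · refine Prod.ext ?_ ?_ <;> dsimp only
        · exact Quot.sound hc
        · exact congrArg (Quot.mk _) (Subtype.ext he.symm)
      · refine Prod.ext ?_ ?_ <;> dsimp only
        · exact congrArg (Quot.mk _) (Subtype.ext he.symm)
        · exact Quot.sound hc)

theorem Fmap_mk (A : AcycGraphOrientation (bridgeGraph G₁ G₂ v w)) :
    Fmap (Quot.mk _ A) =
      (Quot.mk _ ⟨res₁ A.1, res₁_acyclic A.2⟩, Quot.mk _ ⟨res₂ A.1, res₂_acyclic A.2⟩) := rfl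

/-- The inverse map on quotients, by joining with the bridge pointing `v → w`. -/
noncomputable def Gmap [DecidableEq V₂] :
    Quot (fun A B : AcycGraphOrientation G₁ => Click A.1 B.1) →
      Quot (fun A B : AcycGraphOrientation G₂ => Click A.1 B.1) →
      Quot (fun A B : AcycGraphOrientation (bridgeGraph G₁ G₂ v w) => Click A.1 B.1) :=
  Quot.lift
    (fun A => Quot.lift
      (fun B => Quot.mk _ ⟨orient A.1 B.1 Finset.univ, orient_acyclic A.2 B.2 (by simp)⟩)
      (fun B B' h => key2 A.2 B.2 B'.2 h))
    (fun A A' h => by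
      apply funext; intro q
      induction q using Quot.ind with
      | _ B => exact key1 A.2 A'.2 B.2 h)

theorem Gmap_mk [DecidableEq V₂] (A : AcycGraphOrientation G₁) (B : AcycGraphOrientation G₂) :
    Gmap (Quot.mk _ A) (Quot.mk _ B) =
      Quot.mk _ ⟨orient (v := v) (w := w) A.1 B.1 Finset.univ,
        orient_acyclic A.2 B.2 (by simp)⟩ := rfl

end Assemble

theorem kappa_bridge {V₁ V₂ : Type*} [Fintype V₁] [Fintype V₂]
    (G₁ : SimpleGraph V₁) (G₂ : SimpleGraph V₂) (v : V₁) (w : V₂) :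
    kappa (bridgeGraph G₁ G₂ v w) = kappa G₁ * kappa G₂ := by
  classical
  have left : ∀ q, Gmap (Fmap (G₁ := G₁) (G₂ := G₂) (v := v) (w := w) q).1 (Fmap q).2 = q := by
    apply Quot.ind
    rintro ⟨O, hO⟩
    erw [Fmap_mk, Gmap_mk]
    by_cases hb : O.dir (.inl v) (.inr w)
    · have hO' : orient (v := v) (w := w) (res₁ O) (res₂ O) Finset.univ = O := by
        apply GraphOrientation.ext'
        rintro (a | a) (c | c)
        · exact Iff.rfl
        · simp only [orient, Finset.mem_univ, and_true]
          constructor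
          · rintro ⟨rfl, rfl⟩; exact hb
          · intro h
            exact adj_lr.mp ((O.consistent _ _).2 (Or.inl h))
        · simp only [orient, Finset.mem_univ, not_true, and_false, false_iff]
          intro h
          obtain ⟨rfl, rfl⟩ := adj_rl.mp ((O.consistent _ _).2 (Or.inl h))
          exact O.asymm _ _ h hb
        · simp [orient, res₂]
      exact congrArg (Quot.mk _) (Subtype.ext hO')
    · have hb' : O.dir (.inr w) (.inl v) := by
        have hadj : (bridgeGraph G₁ G₂ v w).Adj (.inl v) (.inr w) := adj_lr.mpr ⟨rfl, rfl⟩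
        rcases (O.consistent _ _).1 hadj with h | h
        · exact absurd h hb
        · exact h
      have hO' : orient (v := v) (w := w) (res₁ O) (res₂ O) ∅ = O := by
        apply GraphOrientation.ext'
        rintro (a | a) (c | c)
        · exact Iff.rfl
        · simp only [orient, Finset.notMem_empty, and_false, false_iff]
          intro h
          obtain ⟨rfl, rfl⟩ := adj_lr.mp ((O.consistent _ _).2 (Or.inl h))
          exact O.asymm _ _ h hb'
        · simp only [orient, Finset.notMem_empty, not_false_iff, and_true]
          constructor
          · rintro ⟨rfl, rfl⟩; exact hb'
          · intro h
            obtain ⟨rfl, rfl⟩ := adj_rl.mp ((O.consistent _ _).2 (Or.inl h))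
            exact ⟨rfl, rfl⟩
        · simp [orient, res₂]
      calc (Quot.mk (fun A B : AcycGraphOrientation (bridgeGraph G₁ G₂ v w) => Click A.1 B.1)
              ⟨orient (res₁ O) (res₂ O) Finset.univ,
                orient_acyclic (res₁_acyclic hO) (res₂_acyclic hO) (by simp)⟩)
          = Quot.mk _ ⟨orient (res₁ O) (res₂ O) ∅,
                orient_acyclic (res₁_acyclic hO) (res₂_acyclic hO) (by simp)⟩ :=
            (flip_bridge (res₂_acyclic hO) _ _).symm
        _ = Quot.mk _ ⟨O, hO⟩ := congrArg (Quot.mk _) (Subtype.ext hO')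
  have right : ∀ q₁ q₂, Fmap (Gmap (G₁ := G₁) (G₂ := G₂) (v := v) (w := w) q₁ q₂) = (q₁, q₂) := by
    apply Quot.ind
    intro A
    apply Quot.ind
    intro B
    erw [Gmap_mk, Fmap_mk]
    have h1 : res₁ (orient (v := v) (w := w) A.1 B.1 Finset.univ) = A.1 := by
      apply GraphOrientation.ext'; intro a c; exact Iff.rfl
    have h2 : res₂ (orient (v := v) (w := w) A.1 B.1 Finset.univ) = B.1 := by
      apply GraphOrientation.ext'; intro a c
      simp [res₂, orient]
    refine Prod.ext ?_ ?_ <;> dsimp only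
    · exact congrArg (Quot.mk _) (Subtype.ext h1)
    · exact congrArg (Quot.mk _) (Subtype.ext h2)
  have e : Quot (fun A B : AcycGraphOrientation (bridgeGraph G₁ G₂ v w) => Click A.1 B.1) ≃
      Quot (fun A B : AcycGraphOrientation G₁ => Click A.1 B.1) ×
      Quot (fun A B : AcycGraphOrientation G₂ => Click A.1 B.1) :=
    { toFun := Fmap
      invFun := fun p => Gmap p.1 p.2
      left_inv := fun q => left q
      right_inv := fun p => right p.1 p.2 }
  show Nat.card _ = Nat.card _ * Nat.card _
  rw [Nat.card_congr e, Nat.card_prod]
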